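/- arXiv:1202.1068 — 4 statements merged into one kernel-verified Lean document; each statement's English description precedes it below -/
import Mathlib

section
/- Let n ≥ 3 and W_n = circ(W_1, W_2, ..., W_n) where W is the sequence with W_0 = a, W_1 = b, W_k = p*W_{k-1} + q*W_{k-2}, and suppose b ≠ 0 and W_1 ≠ W_{n+1}. Then det(circ(W_1,...,W_n)) = (b^2 - W_2*W_n)*(b - W_{n+1})^{n-2} + Σ_{k=2}^{n-1} (b*W_{k+1} - W_2*W_k)*(b - W_{n+1})^{k-2}*(q*W_n - q*a)^{n-k}. -/
open Matrix Finset

variable {R : Type*} [CommRing R]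

lemma lowerBidiag_det (n : ℕ) (x y : R) :
    (Matrix.of fun i j : Fin n => if (i:ℕ) = (j:ℕ) then y else if (i:ℕ) = (j:ℕ)+1 then x else 0).det = y ^ n := by
  rw [Matrix.det_of_lowerTriangular]
  · simp [Finset.prod_const]
  · intro i j hij
    have h : (i:ℕ) < (j:ℕ) := hij
    simp only [Matrix.of_apply]
    rw [if_neg (by omega), if_neg (by omega)]

lemma colBidiag_det (n : ℕ) (e : ℕ → R) (x y : R) :
    (Matrix.of fun i j : Fin (n+1) => if (j:ℕ) = 0 then e i else if (i:ℕ) = (j:ℕ) then y else if (i:ℕ) = (j:ℕ)+1 then x else 0).det = e 0 * y ^ n := by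
  rw [Matrix.det_succ_row _ 0, Fin.sum_univ_succ]
  have h2 : ∀ j : Fin n,
      (Matrix.of fun i j : Fin (n+1) => if (j:ℕ) = 0 then e i else if (i:ℕ) = (j:ℕ) then y else if (i:ℕ) = (j:ℕ)+1 then x else 0) 0 j.succ = 0 := by
    intro j
    simp only [Matrix.of_apply, Fin.val_succ, Fin.val_zero]
    split_ifs <;> first | rfl | omega | simp_all
  rw [Finset.sum_eq_zero (fun j _ => by rw [h2 j, mul_zero, zero_mul]), add_zero]
  have h3 : ((Matrix.of fun i j : Fin (n+1) => if (j:ℕ) = 0 then e i else if (i:ℕ) = (j:ℕ) then y else if (i:ℕ) = (j:ℕ)+1 then x else 0).submatrix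
      (Fin.succAbove 0) (Fin.succAbove 0)) =
      (Matrix.of fun i j : Fin n => if (i:ℕ) = (j:ℕ) then y else if (i:ℕ) = (j:ℕ)+1 then x else 0) := by
    ext i j
    simp only [Matrix.submatrix_apply, Matrix.of_apply, Fin.succAbove_zero, Fin.val_succ]
    rw [if_neg (by omega)]
    congr 1 <;> [skip; congr 1] <;> simp [Nat.add_right_cancel_iff] <;> omega
  rw [h3, lowerBidiag_det]
  simp

lemma keydet {R : Type*} [CommRing R] (n : ℕ) (c d : ℕ → R) (x y : R) :
    (Matrix.of fun i j : Fin (n+2) => if (j:ℕ) = 0 then c i else if (j:ℕ) = 1 then d i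
      else if (i:ℕ) = (j:ℕ) then x else if (i:ℕ)+1 = (j:ℕ) then y else 0).det
    = ∑ t ∈ Finset.Icc 1 (n+1), (-1)^(t-1) * (c 0 * d t - c t * d 0) * x^(n+1-t) * y^(t-1) := by
  induction n with
  | zero =>
      rw [show (0:ℕ)+2 = 2 from rfl, Matrix.det_fin_two]
      simp [Finset.Icc_self]
      ring
  | succ m ih =>
    rw [Matrix.det_succ_row _ (Fin.last (m+2))]
    rw [← Finset.sum_subset (Finset.subset_univ ({0, 1, Fin.last (m+2)} : Finset (Fin (m+3))))
      (by
        intro j _ hj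
        simp only [Finset.mem_insert, Finset.mem_singleton] at hj
        push_neg at hj
        obtain ⟨hj0, hj1, hj2⟩ := hj
        have h0 : (j:ℕ) ≠ 0 := fun h => hj0 (Fin.ext h)
        have h1 : (j:ℕ) ≠ 1 := fun h => hj1 (Fin.ext h)
        have h2 : (j:ℕ) ≠ m+2 := fun h => hj2 (Fin.ext h)
        have hlt : (j:ℕ) < m+3 := j.isLt
        have : (Matrix.of fun i j : Fin (m+3) => if (j:ℕ) = 0 then c i else if (j:ℕ) = 1 then d i
            else if (i:ℕ) = (j:ℕ) then x else if (i:ℕ)+1 = (j:ℕ) then y else 0) (Fin.last (m+2)) j = 0 := by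
          simp only [Matrix.of_apply, Fin.val_last]
          rw [if_neg h0, if_neg h1, if_neg (by omega), if_neg (by omega)]
        rw [this, mul_zero, zero_mul])]
    rw [Finset.sum_insert (by
          simp only [Finset.mem_insert, Finset.mem_singleton]
          push_neg
          constructor <;> (intro h; have := congrArg Fin.val h; simp [Fin.val_last] at this)),
        Finset.sum_insert (by
          simp only [Finset.mem_singleton]
          intro h; have := congrArg Fin.val h; simp [Fin.val_last] at this),
        Finset.sum_singleton]
    have hA : ((Matrix.of fun i j : Fin (m+3) =>
                  if (j:ℕ) = 0 then c i
                  else if (j:ℕ) = 1 then d i else if (i:ℕ) = (j:ℕ) then x else if (i:ℕ) + 1 = (j:ℕ) then y else 0).submatrix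
              (Fin.last (m + 2)).succAbove (Fin.succAbove 0)) =
        Matrix.of fun i j : Fin (m+2) => if (j:ℕ) = 0 then d i else if (i:ℕ) = (j:ℕ) then y else if (i:ℕ) = (j:ℕ)+1 then x else 0 := by
      ext i j
      simp only [Matrix.submatrix_apply, Fin.succAbove_last, Fin.succAbove_zero, Matrix.of_apply,
        Fin.coe_castSucc, Fin.val_succ]
      split_ifs <;> first | rfl | omega | simp_all
    have hB : ((Matrix.of fun i j : Fin (m+3) =>
                  if (j:ℕ) = 0 then c i
                  else if (j:ℕ) = 1 then d i else if (i:ℕ) = (j:ℕ) then x else if (i:ℕ) + 1 = (j:ℕ) then y else 0).submatrix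
              (Fin.last (m + 2)).succAbove (Fin.succAbove 1)) =
        Matrix.of fun i j : Fin (m+2) => if (j:ℕ) = 0 then c i else if (i:ℕ) = (j:ℕ) then y else if (i:ℕ) = (j:ℕ)+1 then x else 0 := by
      ext i j
      have hval : (((1 : Fin (m+3)).succAbove j) : ℕ) = if (j:ℕ) = 0 then 0 else (j:ℕ)+1 := by
        simp only [Fin.succAbove, Fin.lt_def, Fin.coe_castSucc, Fin.val_one]
        split_ifs <;> simp <;> first | omega | exact Fin.ext_iff.mpr (by simp_all)
      simp only [Matrix.submatrix_apply, Fin.succAbove_last, Matrix.of_apply, Fin.coe_castSucc, hval]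
      split_ifs <;> first | rfl | omega | simp_all
    have hC : ((Matrix.of fun i j : Fin (m+3) =>
                  if (j:ℕ) = 0 then c i
                  else if (j:ℕ) = 1 then d i else if (i:ℕ) = (j:ℕ) then x else if (i:ℕ) + 1 = (j:ℕ) then y else 0).submatrix
              (Fin.last (m + 2)).succAbove (Fin.last (m + 2)).succAbove) =
        Matrix.of fun i j : Fin (m+2) =>
          if (j:ℕ) = 0 then c i else if (j:ℕ) = 1 then d i else if (i:ℕ) = (j:ℕ) then x else if (i:ℕ) + 1 = (j:ℕ) then y else 0 := by
      ext i j
      simp only [Matrix.submatrix_apply, Fin.succAbove_last, Matrix.of_apply, Fin.coe_castSucc]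
    rw [hA, hB, hC, ih, colBidiag_det, colBidiag_det]
    have e0 : (Matrix.of
              (fun i j : Fin (m+3) =>
                if (j:ℕ) = 0 then c i else if (j:ℕ) = 1 then d i else if (i:ℕ) = (j:ℕ) then x else if (i:ℕ) + 1 = (j:ℕ) then y else 0))
              (Fin.last (m + 2)) 0 = c (m+2) := by
      simp
    have e1 : (Matrix.of
              (fun i j : Fin (m+3) =>
                if (j:ℕ) = 0 then c i else if (j:ℕ) = 1 then d i else if (i:ℕ) = (j:ℕ) then x else if (i:ℕ) + 1 = (j:ℕ) then y else 0))
              (Fin.last (m + 2)) 1 = d (m+2) := by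
      simp
    have e2 : (Matrix.of
              (fun i j : Fin (m+3) =>
                if (j:ℕ) = 0 then c i else if (j:ℕ) = 1 then d i else if (i:ℕ) = (j:ℕ) then x else if (i:ℕ) + 1 = (j:ℕ) then y else 0))
              (Fin.last (m + 2)) (Fin.last (m + 2)) = x := by
      simp only [Matrix.of_apply, Fin.val_last]
      rw [if_neg (by omega), if_neg (by omega)]
      simp
    rw [e0, e1, e2]
    rw [Finset.sum_Icc_succ_top (by omega : 1 ≤ m + 1 + 1)]
    have h5 : ∑ t ∈ Finset.Icc 1 (m+1), (-1:R)^(t-1)*(c 0*d t - c t*d 0)*x^(m+1+1-t)*y^(t-1)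
          = (∑ t ∈ Finset.Icc 1 (m+1), (-1:R)^(t-1)*(c 0*d t - c t*d 0)*x^(m+1-t)*y^(t-1)) * x := by
      rw [Finset.sum_mul]
      refine Finset.sum_congr rfl fun t ht => ?_
      simp only [Finset.mem_Icc] at ht
      rw [show m+1+1-t = (m+1-t)+1 by omega, pow_succ]
      ring
    rw [h5]
    have s0 : ((Fin.last (m+2) : Fin (m+3)) : ℕ) = m + 2 := rfl
    have s1 : (((0 : Fin (m+3))) : ℕ) = 0 := rfl
    have s2 : (((1 : Fin (m+3))) : ℕ) = 1 := rfl
    rw [s0, s1, s2]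
    have p1 : (-1:R) ^ (m+2+0) = (-1:R)^m := by rw [Nat.add_zero, pow_add]; ring
    have p2 : (-1:R) ^ (m+2+1) = (-1:R)^m * (-1) := by rw [pow_add, pow_add]; ring
    have p3 : (-1:R) ^ (m+2+(m+2)) = 1 := Even.neg_one_pow ⟨m+2, by omega⟩
    have p4 : (-1:R) ^ (m+1+1-1) = (-1:R)^m * (-1) := by
      rw [show m+1+1-1 = m+1 from rfl, pow_succ]
    rw [p1, p2, p3, p4]
    rw [show m+1+1-(m+1+1) = 0 from by omega, show m+1+1-1 = m+1 from rfl]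
    ring


lemma subval (m : ℕ) (u v : Fin (m+3)) :
    ((u - v : Fin (m+3)) : ℕ) = if (v:ℕ) ≤ (u:ℕ) then (u:ℕ) - (v:ℕ) else (u:ℕ) + (m+3) - (v:ℕ) := by
  rw [Fin.sub_def]
  have hu := u.isLt
  have hv := v.isLt
  simp only []
  split_ifs with h
  · rw [show m+3 - (v:ℕ) + (u:ℕ) = ((u:ℕ) - (v:ℕ)) + (m+3) by omega, Nat.add_mod_right,
      Nat.mod_eq_of_lt (by omega)]
  · rw [Nat.mod_eq_of_lt (by omega)]
    omega

lemma colops (m : ℕ) (a b p q : ℤ) (W : ℕ → ℤ)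
    (hW0 : W 0 = a) (hW1 : W 1 = b)
    (hrec : ∀ k, W (k + 2) = p * W (k + 1) + q * W k) :
    (Matrix.of fun i j : Fin (m+3) => W ((j - i : Fin (m+3)).val + 1)) *
      (Matrix.of fun k j : Fin (m+3) => if k = j then (1:ℤ) else if 2 ≤ (j:ℕ) ∧ (k:ℕ)+1 = (j:ℕ) then -p else if 2 ≤ (j:ℕ) ∧ (k:ℕ)+2 = (j:ℕ) then -q else 0)
    = Matrix.of fun i j : Fin (m+3) =>
        if (j:ℕ) = 0 then (fun t => if t = 0 then b else W (m+4-t)) (i:ℕ)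
        else if (j:ℕ) = 1 then (fun t => if t = 0 then W 2 else if t = 1 then b else W (m+5-t)) (i:ℕ)
        else if (i:ℕ) = (j:ℕ) then b - W (m+4)
        else if (i:ℕ)+1 = (j:ℕ) then q*a - q*W (m+3) else 0 := by
  have hW2 : W 2 = p * b + q * a := by
    have := hrec 0; rw [hW0, hW1] at this; simpa using this
  ext i j
  rw [Matrix.mul_apply]
  have hi := i.isLt
  have hj := j.isLt
  by_cases hj0 : (j:ℕ) = 0
  case pos =>
    -- column 0
    have hP : ∀ k : Fin (m+3), (if k = j then (1:ℤ) else if 2 ≤ (j:ℕ) ∧ (k:ℕ)+1 = (j:ℕ) then -p else if 2 ≤ (j:ℕ) ∧ (k:ℕ)+2 = (j:ℕ) then -q else 0)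
        = if k = j then 1 else 0 := by
      intro k
      split_ifs with h1 h2 h3 <;> first | rfl | omega
    simp only [Matrix.of_apply]
    rw [Finset.sum_congr rfl (fun k _ => by rw [hP k])]
    simp only [mul_ite, mul_one, mul_zero, Finset.sum_ite_eq', Finset.mem_univ, if_true]
    rw [if_pos hj0, subval]
    by_cases hi0 : (i:ℕ) = 0
    · rw [if_pos (by omega)]
      rw [hi0, hj0]
      simp [hW1]
    · rw [if_neg (by omega), if_neg hi0, hj0]
      exact congrArg W (by omega)
  case neg =>
  by_cases hj1 : (j:ℕ) = 1
  case pos =>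
    have hP : ∀ k : Fin (m+3), (if k = j then (1:ℤ) else if 2 ≤ (j:ℕ) ∧ (k:ℕ)+1 = (j:ℕ) then -p else if 2 ≤ (j:ℕ) ∧ (k:ℕ)+2 = (j:ℕ) then -q else 0)
        = if k = j then 1 else 0 := by
      intro k
      split_ifs with h1 h2 h3 <;> first | rfl | omega
    simp only [Matrix.of_apply]
    rw [Finset.sum_congr rfl (fun k _ => by rw [hP k])]
    simp only [mul_ite, mul_one, mul_zero, Finset.sum_ite_eq', Finset.mem_univ, if_true]
    rw [if_neg hj0, if_pos hj1, subval, hj1]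
    by_cases hi0 : (i:ℕ) = 0
    · rw [if_pos (by omega), hi0]
      norm_num
    · by_cases hi1 : (i:ℕ) = 1
      · rw [if_pos (by omega), hi1]
        simp [hW1]
      · rw [if_neg (by omega), if_neg hi0, if_neg hi1]
        exact congrArg W (by omega)
  case neg =>
    -- columns ≥ 2
    have hj2 : 2 ≤ (j:ℕ) := by omega
    set j1 : Fin (m+3) := ⟨(j:ℕ) - 1, by omega⟩ with hj1def
    set j2 : Fin (m+3) := ⟨(j:ℕ) - 2, by omega⟩ with hj2def
    have hv1 : (j1:ℕ) = (j:ℕ) - 1 := rfl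
    have hv2 : (j2:ℕ) = (j:ℕ) - 2 := rfl
    have hP : ∀ k : Fin (m+3),
        W ((k - i : Fin (m+3)).val + 1) * (if k = j then (1:ℤ) else if 2 ≤ (j:ℕ) ∧ (k:ℕ)+1 = (j:ℕ) then -p else if 2 ≤ (j:ℕ) ∧ (k:ℕ)+2 = (j:ℕ) then -q else 0)
        = (if k = j then W ((k - i : Fin (m+3)).val + 1) else 0)
          + (if k = j1 then (-p) * W ((k - i : Fin (m+3)).val + 1) else 0)
          + (if k = j2 then (-q) * W ((k - i : Fin (m+3)).val + 1) else 0) := by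
      intro k
      by_cases h1 : k = j
      · have e1 : ¬ k = j1 := fun h => by have := congrArg Fin.val h; have := congrArg Fin.val h1; omega
        have e2 : ¬ k = j2 := fun h => by have := congrArg Fin.val h; have := congrArg Fin.val h1; omega
        rw [if_pos h1, if_pos h1, if_neg e1, if_neg e2]; ring
      · by_cases h2 : k = j1
        · have e2 : ¬ k = j2 := fun h => by have := congrArg Fin.val h; have := congrArg Fin.val h2; omega
          have hkv : (k:ℕ) = (j:ℕ) - 1 := congrArg Fin.val h2
          rw [if_neg h1, if_pos (by constructor <;> omega), if_pos h2, if_neg h1, if_neg e2]; ring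
        · by_cases h3 : k = j2
          · have hkv : (k:ℕ) = (j:ℕ) - 2 := congrArg Fin.val h3
            rw [if_neg h1, if_neg (by rintro ⟨_, hh⟩; exact h2 (Fin.ext (by omega))),
              if_pos (by constructor <;> omega), if_neg h1, if_neg h2, if_pos h3]; ring
          · rw [if_neg h1, if_neg (by rintro ⟨_, hh⟩; exact h2 (Fin.ext (by omega))),
              if_neg (by rintro ⟨_, hh⟩; exact h3 (Fin.ext (by omega))),
              if_neg h1, if_neg h2, if_neg h3]; ring
    simp only [Matrix.of_apply]
    rw [Finset.sum_congr rfl (fun k _ => by rw [hP k]), Finset.sum_add_distrib, Finset.sum_add_distrib]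
    simp only [Finset.sum_ite_eq', Finset.mem_univ, if_true]
    rw [if_neg hj0, if_neg hj1]
    by_cases hii : (i:ℕ) = (j:ℕ)
    · rw [if_pos hii]
      have e1 : ((j - i : Fin (m+3)):ℕ) = 0 := by rw [subval]; split_ifs <;> omega
      have e2 : ((j1 - i : Fin (m+3)):ℕ) = m+2 := by rw [subval, hv1]; split_ifs <;> omega
      have e3 : ((j2 - i : Fin (m+3)):ℕ) = m+1 := by rw [subval, hv2]; split_ifs <;> omega
      rw [e1, e2, e3]
      have hr : W (m+4) = p * W (m+3) + q * W (m+2) := hrec (m+2)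
      rw [show (0:ℕ)+1 = 1 from rfl, show m+2+1 = m+3 from rfl, show m+1+1 = m+2 from rfl, hW1]
      linear_combination hr
    · by_cases hii1 : (i:ℕ) + 1 = (j:ℕ)
      · rw [if_neg hii, if_pos hii1]
        have e1 : ((j - i : Fin (m+3)):ℕ) = 1 := by rw [subval]; split_ifs <;> omega
        have e2 : ((j1 - i : Fin (m+3)):ℕ) = 0 := by rw [subval, hv1]; split_ifs <;> omega
        have e3 : ((j2 - i : Fin (m+3)):ℕ) = m+2 := by rw [subval, hv2]; split_ifs <;> omega
        rw [e1, e2, e3, show (1:ℕ)+1 = 2 from rfl, show (0:ℕ)+1 = 1 from rfl,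
          show m+2+1 = m+3 from rfl, hW1]
        linear_combination hW2
      · rw [if_neg hii, if_neg hii1]
        have hv := subval m j i
        have hM2 : 2 ≤ ((j - i : Fin (m+3)):ℕ) := by rw [subval]; split_ifs <;> omega
        have e2 : ((j1 - i : Fin (m+3)):ℕ) = ((j - i : Fin (m+3)):ℕ) - 1 := by
          rw [subval, subval, hv1]; split_ifs <;> omega
        have e3 : ((j2 - i : Fin (m+3)):ℕ) = ((j - i : Fin (m+3)):ℕ) - 2 := by
          rw [subval, subval, hv2]; split_ifs <;> omega
        set M := ((j - i : Fin (m+3)):ℕ) with hMdef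
        have hr : W (M+1) = p * W M + q * W (M-1) := by
          have h0 := hrec (M-1)
          rw [show M-1+2 = M+1 by omega, show M-1+1 = M by omega] at h0
          exact h0
        rw [e2, e3, show M - 1 + 1 = M by omega, show M - 2 + 1 = M - 1 by omega]
        linear_combination hr


theorem stmt7 (n : ℕ) (hn : 3 ≤ n) (a b p q : ℤ) (W : ℕ → ℤ)
    (hW0 : W 0 = a) (hW1 : W 1 = b)
    (hrec : ∀ k, W (k + 2) = p * W (k + 1) + q * W k)
    (hb : b ≠ 0) (hne : W 1 ≠ W (n + 1)) :
    (Matrix.of fun i j : Fin n => W ((j - i : Fin n).val + 1)).det =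
      (b ^ 2 - W 2 * W n) * (b - W (n + 1)) ^ (n - 2) +
        ∑ k ∈ Finset.Icc 2 (n - 1),
          (b * W (k + 1) - W 2 * W k) * (b - W (n + 1)) ^ (k - 2) *
            (q * W n - q * a) ^ (n - k) := by
  obtain ⟨m, rfl⟩ : ∃ m, n = m + 3 := ⟨n - 3, by omega⟩
  have hPdet : (Matrix.of fun k j : Fin (m+3) => if k = j then (1:ℤ) else if 2 ≤ (j:ℕ) ∧ (k:ℕ)+1 = (j:ℕ) then -p else if 2 ≤ (j:ℕ) ∧ (k:ℕ)+2 = (j:ℕ) then -q else 0).det = 1 := by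
    rw [Matrix.det_of_upperTriangular]
    · exact Finset.prod_eq_one (fun i _ => by simp)
    · intro i j hji
      have h : (j:ℕ) < (i:ℕ) := hji
      simp only [Matrix.of_apply]
      rw [if_neg (fun hh => by have := congrArg Fin.val hh; omega),
          if_neg (by rintro ⟨_, hh⟩; omega), if_neg (by rintro ⟨_, hh⟩; omega)]
  have hsum : (Matrix.of fun i j : Fin (m+3) => W ((j - i : Fin (m+3)).val + 1)).det =
      ∑ t ∈ Finset.Icc 1 (m+1+1), (-1:ℤ)^(t-1) *
        ((fun t => if t = 0 then b else W (m+4-t)) 0 * (fun t => if t = 0 then W 2 else if t = 1 then b else W (m+5-t)) t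
          - (fun t => if t = 0 then b else W (m+4-t)) t * (fun t => if t = 0 then W 2 else if t = 1 then b else W (m+5-t)) 0)
        * (b - W (m+4))^(m+1+1-t) * (q*a - q*W (m+3))^(t-1) := by
    have hCP : ((Matrix.of fun i j : Fin (m+3) => W ((j - i : Fin (m+3)).val + 1)) *
        (Matrix.of fun k j : Fin (m+3) => if k = j then (1:ℤ) else if 2 ≤ (j:ℕ) ∧ (k:ℕ)+1 = (j:ℕ) then -p else if 2 ≤ (j:ℕ) ∧ (k:ℕ)+2 = (j:ℕ) then -q else 0)).det
        = (Matrix.of fun i j : Fin (m+3) => W ((j - i : Fin (m+3)).val + 1)).det := by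
      rw [Matrix.det_mul, hPdet, mul_one]
    rw [← hCP, colops m a b p q W hW0 hW1 hrec]
    exact keydet (m+1) (fun t => if t = 0 then b else W (m+4-t))
      (fun t => if t = 0 then W 2 else if t = 1 then b else W (m+5-t))
      (b - W (m+4)) (q*a - q*W (m+3))
  rw [hsum]
  simp only [show m+3-1 = m+2 from rfl, show m+3-2 = m+1 from rfl, show m+3+1 = m+4 from rfl]
  have hsplit : Finset.Icc 1 (m+1+1) = insert 1 (Finset.Icc 2 (m+2)) := by
    ext z; simp only [Finset.mem_Icc, Finset.mem_insert]; omega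
  rw [hsplit, Finset.sum_insert (by simp)]
  congr 1
  · simp only [reduceIte, show (1:ℕ)-1 = 0 from rfl, pow_zero, mul_one,
      show m+1+1-1 = m+1 from rfl, show m+4-1 = m+3 from rfl, pow_zero]
    split_ifs <;> first | omega | exact (False.elim (by assumption)) | ring1
  · refine Finset.sum_nbij' (fun t => m+4-t) (fun k => m+4-k) ?_ ?_ ?_ ?_ ?_
    · intro t ht; simp only [Finset.mem_Icc] at ht ⊢; omega
    · intro k hk; simp only [Finset.mem_Icc] at hk ⊢; omega
    · intro t ht; simp only [Finset.mem_Icc] at ht; show m+4-(m+4-t) = t; omega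
    · intro k hk; simp only [Finset.mem_Icc] at hk; show m+4-(m+4-k) = k; omega
    · intro t ht
      simp only [Finset.mem_Icc] at ht
      obtain ⟨ht2, htm⟩ := ht
      simp only [reduceIte]
      rw [if_neg (show ¬ t = 0 by omega), if_neg (show ¬ t = 1 by omega),
        if_neg (show ¬ t = 0 by omega)]
      rw [show m+4-t+1 = m+5-t by omega, show m+4-t-2 = m+2-t by omega,
        show m+3-(m+4-t) = t-1 by omega, show m+1+1-t = m+2-t by omega]
      have hneg : ((-1:ℤ))^(t-1) * (q*a - q*W (m+3))^(t-1) = (q*W (m+3) - q*a)^(t-1) := by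
        rw [← neg_pow, neg_sub]
      linear_combination ((b * W (m+5-t) - W (m+4-t) * W 2) * (b - W (m+4))^(m+2-t)) * hneg
end

section
/- Let L_n be the Lucas numbers (L_1 = 1, L_2 = 3, L_k = L_{k-1} + L_{k-2}, with L_0 = 2). For n ≥ 3, det(circ(L_1, ..., L_n)) = (1 - 3*L_n)*(1 - L_{n+1})^{n-2} + Σ_{k=2}^{n-1} (L_{k+1} - 3*L_k)*(1 - L_{n+1})^{k-2}*(L_n - 2)^{n-k}. -/
open Matrix Finset

lemma det_lowerBidiag (s : ℕ) (u d : ℤ) :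
    (Matrix.of fun i j : Fin s => if i.val = j.val then u else if i.val = j.val + 1 then d else 0).det
      = u ^ s := by
  rw [Matrix.det_of_lowerTriangular]
  · rw [Finset.prod_congr rfl (g := fun _ => u) (by intro i _; simp), Finset.prod_const]
    simp
  · intro i j hij
    have hij' : i.val < j.val := hij
    simp only [Matrix.of_apply]
    rw [if_neg (by omega), if_neg (by omega)]

lemma det_Gmat (s : ℕ) (c : ℕ → ℤ) (u d : ℤ) :
    (Matrix.of fun i j : Fin (s+1) => if j.val = 0 then c i.val
        else if i.val = j.val then u else if i.val = j.val + 1 then d else 0).det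
      = c 0 * u ^ s := by
  rw [Matrix.det_succ_row_zero]
  rw [Fin.sum_univ_succ]
  have h1 : ∀ j : Fin s, ((Matrix.of fun i j : Fin (s+1) => if j.val = 0 then c i.val
        else if i.val = j.val then u else if i.val = j.val + 1 then d else 0) 0 j.succ) = 0 := by
    intro j
    simp only [Matrix.of_apply, Fin.val_succ, Fin.val_zero]
    split_ifs <;> first | rfl | simp_all
  simp only [h1, zero_mul, mul_zero, Finset.sum_const_zero, add_zero]
  have h2 : ((Matrix.of fun i j : Fin (s+1) => if j.val = 0 then c i.val
        else if i.val = j.val then u else if i.val = j.val + 1 then d else 0).submatrix Fin.succ ((0 : Fin (s+1)).succAbove)).det = u ^ s := by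
    rw [← det_lowerBidiag s u d]
    congr 1
    funext i j
    simp only [Matrix.submatrix_apply, Matrix.of_apply, Fin.succAbove_zero, Fin.val_succ]
    rw [if_neg (by omega)]
    split_ifs <;> first | rfl | omega
  rw [h2]
  simp

lemma det_Hmat (a b : ℕ → ℤ) (u d : ℤ) : ∀ s : ℕ,
    (Matrix.of fun i j : Fin (s+2) => if j.val = 0 then a i.val else if j.val = 1 then b i.val
        else if i.val = j.val then d else if i.val + 1 = j.val then u else 0).det
      = ∑ k ∈ Finset.Icc 1 (s+1), (-u)^(k-1) * d^(s+1-k) * (a 0 * b k - b 0 * a k) := by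
  intro s
  induction s with
  | zero =>
    rw [Matrix.det_fin_two]
    norm_num
  | succ s ih =>
    set M : Matrix (Fin (s+3)) (Fin (s+3)) ℤ := Matrix.of fun i j : Fin (s+3) =>
      if j.val = 0 then a i.val else if j.val = 1 then b i.val
        else if i.val = j.val then d else if i.val + 1 = j.val then u else 0 with hM
    rw [Matrix.det_succ_row M (Fin.last (s+2))]
    have hzero : ∀ j ∈ (Finset.univ : Finset (Fin (s+3))),
        j ∉ ({0, 1, Fin.last (s+2)} : Finset (Fin (s+3))) →
        (-1 : ℤ)^((Fin.last (s+2)).val + j.val) * M (Fin.last (s+2)) j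
          * (M.submatrix (Fin.last (s+2)).succAbove j.succAbove).det = 0 := by
      intro j _ hj
      simp only [Finset.mem_insert, Finset.mem_singleton, Fin.ext_iff, Fin.val_last,
        Fin.val_zero, Fin.val_one, not_or] at hj
      have : M (Fin.last (s+2)) j = 0 := by
        simp only [hM, Matrix.of_apply, Fin.val_last]
        rw [if_neg (by omega), if_neg (by omega), if_neg (by omega), if_neg (by omega)]
      rw [this]; ring
    rw [← Finset.sum_subset (Finset.subset_univ ({0, 1, Fin.last (s+2)} : Finset (Fin (s+3)))) hzero]
    have hne01 : (0 : Fin (s+3)) ≠ 1 := by simp [Fin.ext_iff]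
    have hne0l : (0 : Fin (s+3)) ≠ Fin.last (s+2) := by simp [Fin.ext_iff]
    have hne1l : (1 : Fin (s+3)) ≠ Fin.last (s+2) := by
      simp only [ne_eq, Fin.ext_iff, Fin.val_one, Fin.val_last]; omega
    rw [Finset.sum_insert (by simp [hne01, hne0l]), Finset.sum_insert (by simp [hne1l]),
      Finset.sum_singleton]
    -- minor at j = 0
    have hm0 : (M.submatrix (Fin.last (s+2)).succAbove (0 : Fin (s+3)).succAbove).det
        = b 0 * u ^ (s+1) := by
      rw [← det_Gmat (s+1) b u d]
      congr 1
      funext i j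
      simp only [Matrix.submatrix_apply, hM, Matrix.of_apply, Fin.succAbove_last,
        Fin.succAbove_zero, Fin.coe_castSucc, Fin.val_succ]
      rw [if_neg (by omega)]
      split_ifs <;> first | rfl | omega
    -- minor at j = 1
    have hm1 : (M.submatrix (Fin.last (s+2)).succAbove (1 : Fin (s+3)).succAbove).det
        = a 0 * u ^ (s+1) := by
      rw [← det_Gmat (s+1) a u d]
      congr 1
      funext i j
      have hlt : (j.castSucc < (1 : Fin (s+3))) ↔ j.val < 1 := by
        rw [Fin.lt_def]; simp
      by_cases hj : j.val = 0
      · have hval : ((1 : Fin (s+3)).succAbove j).val = 0 := by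
          rw [Fin.succAbove, if_pos (hlt.mpr (by omega))]; exact hj
        simp only [Matrix.submatrix_apply, hM, Matrix.of_apply, Fin.succAbove_last,
          Fin.coe_castSucc, hval]
        simp [hj]
      · have hval : ((1 : Fin (s+3)).succAbove j).val = j.val + 1 := by
          rw [Fin.succAbove, if_neg (by rw [hlt]; omega)]; simp
        simp only [Matrix.submatrix_apply, hM, Matrix.of_apply, Fin.succAbove_last,
          Fin.coe_castSucc, hval]
        rw [if_neg (by omega), if_neg (by omega), if_neg hj]
        split_ifs <;> first | rfl | omega
    -- minor at j = last
    have hml : (M.submatrix (Fin.last (s+2)).succAbove (Fin.last (s+2)).succAbove).det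
        = ∑ k ∈ Finset.Icc 1 (s+1), (-u)^(k-1) * d^(s+1-k) * (a 0 * b k - b 0 * a k) := by
      rw [← ih]
      congr 1
      funext i j
      simp only [Matrix.submatrix_apply, hM, Matrix.of_apply, Fin.succAbove_last,
        Fin.coe_castSucc]
    have hMl0 : M (Fin.last (s+2)) 0 = a (s+2) := by
      simp [hM, Fin.val_last]
    have hMl1 : M (Fin.last (s+2)) 1 = b (s+2) := by
      simp [hM]
    have hMll : M (Fin.last (s+2)) (Fin.last (s+2)) = d := by
      simp [hM]
    rw [hm0, hm1, hml, hMl0, hMl1, hMll]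
    simp only [Fin.val_last, Fin.val_zero, Fin.val_one, add_zero]
    have e1 : (-1:ℤ)^(s+2+(s+2)) * d *
        (∑ k ∈ Finset.Icc 1 (s+1), (-u)^(k-1) * d^(s+1-k) * (a 0 * b k - b 0 * a k))
        = ∑ k ∈ Finset.Icc 1 (s+1), (-u)^(k-1) * d^(s+2-k) * (a 0 * b k - b 0 * a k) := by
      rw [show (-1:ℤ)^(s+2+(s+2)) = 1 from Even.neg_one_pow ⟨s+2, rfl⟩, one_mul,
        Finset.mul_sum]
      refine Finset.sum_congr rfl fun k hk => ?_
      rw [Finset.mem_Icc] at hk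
      rw [show s+2-k = (s+1-k)+1 by omega, pow_succ]
      ring
    have e2 : (-1:ℤ)^(s+2) * a (s+2) * (b 0 * u^(s+1)) +
        (-1:ℤ)^(s+2+1) * b (s+2) * (a 0 * u^(s+1))
        = (-u)^(s+2-1) * d^(s+2-(s+2)) * (a 0 * b (s+2) - b 0 * a (s+2)) := by
      rw [show s+2-1 = s+1 by omega, show s+2-(s+2) = 0 by omega, neg_pow,
        show (-1:ℤ)^(s+2) = (-1)^(s+1)*(-1) from pow_succ _ _,
        show (-1:ℤ)^(s+2+1) = (-1)^(s+1)*(-1)*(-1) from by rw [pow_succ, pow_succ]]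
      ring
    rw [Finset.sum_Icc_succ_top (by omega : 1 ≤ s + 2)]
    linear_combination e1 + e2

theorem stmt12 (n : ℕ) (hn : 3 ≤ n) (L : ℕ → ℤ)
    (hL0 : L 0 = 2) (hL1 : L 1 = 1)
    (hrec : ∀ k, L (k + 2) = L (k + 1) + L k) :
    (Matrix.of fun i j : Fin n => L ((j - i : Fin n).val + 1)).det =
      (1 - 3 * L n) * (1 - L (n + 1)) ^ (n - 2) +
        ∑ k ∈ Finset.Icc 2 (n - 1),
          (L (k + 1) - 3 * L k) * (1 - L (n + 1)) ^ (k - 2) * (L n - 2) ^ (n - k) := by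
  have hL2 : L 2 = 3 := by have := hrec 0; rw [hL0, hL1] at this; linarith
  obtain ⟨m, rfl⟩ : ∃ m, n = m + 2 := ⟨n - 2, by omega⟩
  set n := m + 2 with hn2
  have hm : 1 ≤ m := by omega
  set N : Matrix (Fin n) (Fin n) ℤ := Matrix.of fun i j : Fin n => L ((j - i : Fin n).val + 1) with hN
  set uu : ℤ := 2 - L n with huu
  set dd : ℤ := 1 - L (n+1) with hdd
  set aa : ℕ → ℤ := fun t => L ((n - t) % n + 1) with haa
  set bb : ℕ → ℤ := fun t => L ((n + 1 - t) % n + 1) with hbb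
  set U : Matrix (Fin n) (Fin n) ℤ := Matrix.of fun k j : Fin n =>
    if k.val = j.val then 1
    else if 2 ≤ j.val ∧ (k.val + 1 = j.val ∨ k.val + 2 = j.val) then -1 else 0 with hU
  have hdetU : U.det = 1 := by
    rw [Matrix.det_of_upperTriangular]
    · rw [Finset.prod_congr rfl (g := fun _ => (1:ℤ)) (by intro i _; simp [hU]), Finset.prod_const]
      simp
    · intro i j hij
      have hij' : j.val < i.val := hij
      simp only [hU, Matrix.of_apply]
      rw [if_neg (by omega), if_neg (by omega)]
  have hmod : ∀ x : ℕ, x < 2*n → x % n = if x < n then x else x - n := by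
    intro x hx
    split_ifs with h
    · exact Nat.mod_eq_of_lt h
    · rw [Nat.mod_eq_sub_mod (by omega), Nat.mod_eq_of_lt (by omega)]
  have hNU : N * U = Matrix.of fun i j : Fin n =>
      if j.val = 0 then aa i.val else if j.val = 1 then bb i.val
        else if i.val = j.val then dd else if i.val + 1 = j.val then uu else 0 := by
    funext i j
    have hiv : i.val < n := i.isLt
    have hjv : j.val < n := j.isLt
    rw [Matrix.mul_apply]
    by_cases hj2 : 2 ≤ j.val
    · -- columns with the recurrence
      set jm1 : Fin n := ⟨j.val - 1, by omega⟩ with hjm1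
      set jm2 : Fin n := ⟨j.val - 2, by omega⟩ with hjm2
      have hUcol : ∀ k : Fin n, U k j = (if k = j then (1:ℤ) else 0) +
          (if k = jm1 then -1 else 0) + (if k = jm2 then -1 else 0) := by
        intro k
        simp only [hU, Matrix.of_apply, Fin.ext_iff, hjm1, hjm2]
        split_ifs <;> omega
      simp only [hUcol, mul_add]
      rw [Finset.sum_add_distrib, Finset.sum_add_distrib]
      simp only [mul_ite, mul_one, mul_neg, mul_zero]
      rw [Finset.sum_ite_eq' Finset.univ j (fun k => N i k),
        Finset.sum_ite_eq' Finset.univ jm1 (fun k => -N i k),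
        Finset.sum_ite_eq' Finset.univ jm2 (fun k => -N i k)]
      simp only [Finset.mem_univ, if_true]
      have ht : (j - i).val = (n - i.val + j.val) % n := by rw [Fin.sub_def]
      have ht1 : (jm1 - i).val = (n - i.val + (j.val - 1)) % n := by rw [Fin.sub_def]
      have ht2 : (jm2 - i).val = (n - i.val + (j.val - 2)) % n := by rw [Fin.sub_def]
      rw [hmod _ (by omega)] at ht
      rw [hmod _ (by omega)] at ht1
      rw [hmod _ (by omega)] at ht2
      simp only [hN, Matrix.of_apply, Fin.ext_iff]
      rw [if_neg (by omega), if_neg (by omega)]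
      by_cases hc0 : i.val = j.val
      · rw [if_pos hc0]
        have et : (j - i).val = 0 := by rw [ht]; split_ifs <;> omega
        have et1 : (jm1 - i).val = n - 1 := by rw [ht1]; split_ifs <;> omega
        have et2 : (jm2 - i).val = n - 2 := by rw [ht2]; split_ifs <;> omega
        rw [et, et1, et2]
        have e1 := hrec (n - 1)
        rw [show n - 1 + 2 = n + 1 by omega, show n - 1 + 1 = n by omega] at e1
        rw [show n - 1 + 1 = n by omega, show n - 2 + 1 = n - 1 by omega,
          show (0:ℕ) + 1 = 1 from rfl]
        rw [hdd, hL1]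
        linarith
      · rw [if_neg hc0]
        by_cases hc1 : i.val + 1 = j.val
        · rw [if_pos hc1]
          have et : (j - i).val = 1 := by rw [ht]; split_ifs <;> omega
          have et1 : (jm1 - i).val = 0 := by rw [ht1]; split_ifs <;> omega
          have et2 : (jm2 - i).val = n - 1 := by rw [ht2]; split_ifs <;> omega
          rw [et, et1, et2, show n - 1 + 1 = n by omega,
            show (1:ℕ) + 1 = 2 from rfl, show (0:ℕ) + 1 = 1 from rfl, hL2, hL1, huu]
          linarith
        · rw [if_neg hc1]
          have htt2 : 2 ≤ (j - i).val := by rw [ht]; split_ifs <;> omega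
          have et1 : (jm1 - i).val = (j - i).val - 1 := by
            rw [ht1]; conv_rhs => rw [ht]
            split_ifs <;> omega
          have et2 : (jm2 - i).val = (j - i).val - 2 := by
            rw [ht2]; conv_rhs => rw [ht]
            split_ifs <;> omega
          rw [et1, et2]
          have e1 := hrec ((j - i).val - 1)
          rw [show (j - i).val - 1 + 2 = (j - i).val + 1 by omega,
            show (j - i).val - 1 + 1 = (j - i).val by omega] at e1
          rw [show (j - i).val - 2 + 1 = (j - i).val - 1 by omega,
            show (j - i).val - 1 + 1 = (j - i).val by omega]
          linarith
    · -- columns 0 and 1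
      have hUcol : ∀ k : Fin n, U k j = if k = j then (1:ℤ) else 0 := by
        intro k
        simp only [hU, Matrix.of_apply, Fin.ext_iff]
        split_ifs <;> omega
      simp only [hUcol, mul_ite, mul_one, mul_zero]
      rw [Finset.sum_ite_eq' Finset.univ j (fun k => N i k)]
      simp only [Finset.mem_univ, if_true]
      have ht : (j - i).val = (n - i.val + j.val) % n := by rw [Fin.sub_def]
      rw [hmod _ (by omega)] at ht
      simp only [hN, Matrix.of_apply]
      interval_cases h : j.val
      · rw [if_pos rfl]
        show L ((j - i).val + 1) = L ((n - i.val) % n + 1)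
        have : (n - i.val) % n = (j-i).val := by
          rw [hmod _ (by omega), ht]; split_ifs <;> omega
        rw [this]
      · rw [if_neg (by omega), if_pos rfl]
        show L ((j - i).val + 1) = L ((n + 1 - i.val) % n + 1)
        have : (n + 1 - i.val) % n = (j-i).val := by
          rw [hmod _ (by omega), ht]; split_ifs <;> omega
        rw [this]
  have key : N.det = ∑ k ∈ Finset.Icc 1 (m+1), (-uu)^(k-1) * dd^(m+1-k) * (aa 0 * bb k - bb 0 * aa k) := by
    have : N.det = (N * U).det := by rw [Matrix.det_mul, hdetU, mul_one]
    rw [this, hNU]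
    exact det_Hmat aa bb uu dd m
  rw [key]
  -- now pure sum manipulation
  have haa0 : aa 0 = 1 := by simp [haa, Nat.sub_zero, Nat.mod_self, hL1]
  have hbb0 : bb 0 = 3 := by
    have : (n + 1 - 0) % n = 1 := by
      rw [Nat.sub_zero, hmod _ (by omega)]; split_ifs <;> omega
    rw [hbb]; simp only [this]; exact hL2
  have haa1 : aa 1 = L n := by
    have : (n - 1) % n = n - 1 := Nat.mod_eq_of_lt (by omega)
    rw [haa]; simp only [this, show n - 1 + 1 = n by omega]
  have hbb1 : bb 1 = 1 := by
    have : (n + 1 - 1) % n = 0 := by rw [show n+1-1 = n by omega, Nat.mod_self]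
    rw [hbb]; simp only [this]; exact hL1
  have hsplit : Finset.Icc 1 (m+1) = insert 1 (Finset.Icc 2 (m+1)) := by
    ext x; simp only [Finset.mem_Icc, Finset.mem_insert]; omega
  rw [hsplit, Finset.sum_insert (by simp)]
  have hterm1 : (-uu)^(1-1) * dd^(m+1-1) * (aa 0 * bb 1 - bb 0 * aa 1)
      = (1 - 3 * L n) * (1 - L (n + 1)) ^ (n - 2) := by
    rw [haa0, hbb0, haa1, hbb1, hdd, show n - 2 = m by omega, show m + 1 - 1 = m by omega]
    ring
  rw [hterm1]
  congr 1
  rw [show n - 1 = m + 1 by omega]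
  refine Finset.sum_nbij' (fun k => n + 1 - k) (fun k => n + 1 - k) ?_ ?_ ?_ ?_ ?_
  · intro k hk; simp only [Finset.mem_Icc] at *; omega
  · intro k hk; simp only [Finset.mem_Icc] at *; omega
  · intro k hk; simp only [Finset.mem_Icc] at hk
    show n + 1 - (n + 1 - k) = k; omega
  · intro k hk; simp only [Finset.mem_Icc] at hk
    show n + 1 - (n + 1 - k) = k; omega
  · intro k hk
    simp only [Finset.mem_Icc] at hk
    have haak : aa k = L (n + 1 - k) := by
      have : (n - k) % n = n - k := Nat.mod_eq_of_lt (by omega)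
      rw [haa]; simp only [this, show n - k + 1 = n + 1 - k by omega]
    have hbbk : bb k = L (n + 2 - k) := by
      have : (n + 1 - k) % n = n + 1 - k := Nat.mod_eq_of_lt (by omega)
      rw [hbb]; simp only [this, show n + 1 - k + 1 = n + 2 - k by omega]
    rw [haak, hbbk, haa0, hbb0, huu, hdd]
    rw [show n + 1 - k + 1 = n + 2 - k by omega, show n + 1 - k - 2 = m + 1 - k by omega,
      show n - (n + 1 - k) = k - 1 by omega, show -(2 - L n) = L n - 2 by ring]
    ring
end

section
/- Let W be the sequence with W_0 = a, W_1 = b, W_k = p*W_{k-1} + q*W_{k-2}, working over ℚ with b ≠ 0 and W_1 ≠ W_{n+1}, n ≥ 3. Define g_n = W_1 - W_2*W_n/W_1 + Σ_{k=2}^{n-1} (W_{k+1} - W_2*W_k/W_1)*(q*(W_n - W_0)/(W_1 - W_{n+1}))^{n-k}. Then circ(W_1,...,W_n) is invertible if and only if g_n ≠ 0. -/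
/-- Column-operation matrix: unit upper triangular. -/
def myG (m : ℕ) (c p q : ℚ) : Matrix (Fin (m+3)) (Fin (m+3)) ℚ :=
  Matrix.of fun k j =>
    (if k = j then (1:ℚ) else 0)
    + (if k = 0 then (if (j:ℕ) = 1 then -c else 0) else 0)
    + (if k = j - 1 then (if 2 ≤ (j:ℕ) then -p else 0) else 0)
    + (if k = j - 2 then (if 2 ≤ (j:ℕ) then -q else 0) else 0)

/-- Inverse row-operation matrix: unit upper triangular bidiagonal. -/
def myS (m : ℕ) (r : ℚ) : Matrix (Fin (m+3)) (Fin (m+3)) ℚ :=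
  Matrix.of fun i k =>
    (if k = i then (1:ℚ) else 0)
    + (if k = i + 1 then (if 1 ≤ (i:ℕ) ∧ (i:ℕ) ≤ m+1 then -r else 0) else 0)

def myU (m : ℕ) (r : ℚ) (W : ℕ → ℚ) (i : ℕ) : ℚ :=
  ∑ k ∈ Finset.Icc i (m+2), r^(k-i) * W (m+4-k)

def myV (m : ℕ) (r c : ℚ) (W : ℕ → ℚ) (i : ℕ) : ℚ :=
  ∑ k ∈ Finset.Icc i (m+2), r^(k-i) * ((if k = 1 then W 1 else W (m+5-k)) - c * W (m+4-k))

def myL (m : ℕ) (r c x : ℚ) (W : ℕ → ℚ) : Matrix (Fin (m+3)) (Fin (m+3)) ℚ :=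
  Matrix.of fun i j =>
    if (i:ℕ) = 0 then (if (j:ℕ) = 0 then W 1 else 0)
    else if (j:ℕ) = 0 then myU m r W i
    else if (j:ℕ) = 1 then myV m r c W i
    else if i = j then x else 0

lemma myPeel (m : ℕ) (r : ℚ) (f : ℕ → ℚ) (i : ℕ) (hi : i ≤ m+2) :
    ∑ k ∈ Finset.Icc i (m+2), r^(k-i) * f k
      = f i + r * ∑ k ∈ Finset.Icc (i+1) (m+2), r^(k-(i+1)) * f k := by
  rw [Finset.Icc_eq_cons_Ioc hi, Finset.sum_cons, ← Finset.Icc_add_one_left_eq_Ioc]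
  simp only [Nat.sub_self, pow_zero, one_mul]
  congr 1
  rw [Finset.mul_sum]
  refine Finset.sum_congr rfl fun k hk => ?_
  simp only [Finset.mem_Icc, Nat.succ_eq_add_one] at hk
  rw [show k - i = (k - (i+1)) + 1 by omega, pow_succ]
  ring

lemma myMulG (m : ℕ) (c p q : ℚ) (M : Matrix (Fin (m+3)) (Fin (m+3)) ℚ) (i j : Fin (m+3)) :
    (M * myG m c p q) i j
      = M i j + (if (j:ℕ) = 1 then -c else 0) * M i 0
        + (if 2 ≤ (j:ℕ) then -p else 0) * M i (j-1)
        + (if 2 ≤ (j:ℕ) then -q else 0) * M i (j-2) := by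
  simp only [Matrix.mul_apply, myG, Matrix.of_apply, mul_add, Finset.sum_add_distrib,
    mul_ite, mul_one, mul_zero, Finset.sum_ite_eq', Finset.mem_univ, if_true]
  split_ifs <;> ring

lemma myMulS (m : ℕ) (r : ℚ) (L : Matrix (Fin (m+3)) (Fin (m+3)) ℚ) (i j : Fin (m+3)) :
    (myS m r * L) i j
      = L i j + (if 1 ≤ (i:ℕ) ∧ (i:ℕ) ≤ m+1 then -r else 0) * L (i+1) j := by
  simp only [Matrix.mul_apply, myS, Matrix.of_apply, add_mul, Finset.sum_add_distrib,
    ite_mul, one_mul, zero_mul, Finset.sum_ite_eq, Finset.sum_ite_eq', Finset.mem_univ, if_true]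

lemma myFinSub (m : ℕ) (i j : Fin (m+3)) :
    ((j - i : Fin (m+3))).val = if (i:ℕ) ≤ (j:ℕ) then (j:ℕ) - (i:ℕ) else m+3 + (j:ℕ) - (i:ℕ) := by
  have hi := i.isLt
  have hj := j.isLt
  rw [Fin.sub_def]
  rcases le_or_gt (i:ℕ) (j:ℕ) with h | h
  · rw [if_pos h]
    simp only []
    rw [show m+3 - (i:ℕ) + (j:ℕ) = ((j:ℕ) - (i:ℕ)) + (m+3) by omega, Nat.add_mod_right,
      Nat.mod_eq_of_lt (by omega)]
  · rw [if_neg (by omega)]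
    simp only []
    rw [Nat.mod_eq_of_lt (by omega)]
    omega

lemma myFinAdd1 (m : ℕ) (i : Fin (m+3)) (h : (i:ℕ) ≤ m+1) : ((i + 1 : Fin (m+3))).val = (i:ℕ) + 1 := by
  rw [Fin.add_def]
  simp only [Fin.val_one]
  exact Nat.mod_eq_of_lt (by omega)

lemma myFinSub1 (m : ℕ) (j : Fin (m+3)) (h : 1 ≤ (j:ℕ)) : ((j - 1 : Fin (m+3))).val = (j:ℕ) - 1 := by
  rw [myFinSub]
  simp only [Fin.val_one]
  exact if_pos h

lemma myFinSub2 (m : ℕ) (j : Fin (m+3)) (h : 2 ≤ (j:ℕ)) : ((j - 2 : Fin (m+3))).val = (j:ℕ) - 2 := by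
  rw [myFinSub]
  have h2 : ((2 : Fin (m+3)) : ℕ) = 2 := rfl
  rw [h2, if_pos h]

lemma myGdet (m : ℕ) (c p q : ℚ) : (myG m c p q).det = 1 := by
  have htri : (myG m c p q).BlockTriangular id := by
    intro i j hij
    have hlt : (j:ℕ) < (i:ℕ) := hij
    have h0 : ((0 : Fin (m+3)) : ℕ) = 0 := rfl
    simp only [myG, Matrix.of_apply]
    rw [if_neg (by simp only [Fin.ext_iff]; omega),
      if_neg (by simp only [Fin.ext_iff, h0]; omega)]
    have h3 : (if i = j - 1 then (if 2 ≤ (j:ℕ) then -p else 0) else 0) = 0 := by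
      by_cases h2 : 2 ≤ (j:ℕ)
      · rw [if_neg]
        intro h
        have hv := congrArg Fin.val h
        rw [myFinSub1 m j (by omega)] at hv
        omega
      · simp [h2]
    have h4 : (if i = j - 2 then (if 2 ≤ (j:ℕ) then -q else 0) else 0) = 0 := by
      by_cases h2 : 2 ≤ (j:ℕ)
      · rw [if_neg]
        intro h
        have hv := congrArg Fin.val h
        rw [myFinSub2 m j h2] at hv
        omega
      · simp [h2]
    rw [h3, h4]
    ring
  rw [Matrix.det_of_upperTriangular htri]
  apply Finset.prod_eq_one
  intro j _
  have h0 : ((0 : Fin (m+3)) : ℕ) = 0 := rfl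
  simp only [myG, Matrix.of_apply, if_pos rfl]
  have h2 : (if j = 0 then (if (j:ℕ) = 1 then -c else 0) else 0) = 0 := by
    by_cases h : j = 0
    · subst h; simp
    · simp [h]
  have h3 : (if j = j - 1 then (if 2 ≤ (j:ℕ) then -p else 0) else 0) = 0 := by
    by_cases hj : 2 ≤ (j:ℕ)
    · rw [if_neg]
      intro h
      have hv := congrArg Fin.val h
      rw [myFinSub1 m j (by omega)] at hv
      omega
    · simp [hj]
  have h4 : (if j = j - 2 then (if 2 ≤ (j:ℕ) then -q else 0) else 0) = 0 := by
    by_cases hj : 2 ≤ (j:ℕ)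
    · rw [if_neg]
      intro h
      have hv := congrArg Fin.val h
      rw [myFinSub2 m j hj] at hv
      omega
    · simp [hj]
  rw [h2, h3, h4]
  simp

lemma mySdet (m : ℕ) (r : ℚ) : (myS m r).det = 1 := by
  have hne : ∀ i : Fin (m+3), i ≠ i + 1 := by
    intro i h
    have hv := congrArg Fin.val h
    by_cases hi : (i:ℕ) ≤ m+1
    · rw [myFinAdd1 m i hi] at hv; omega
    · have : ((i + 1 : Fin (m+3))).val = ((i:ℕ) + 1) % (m+3) := by
        rw [Fin.add_def]; rfl
      rw [this] at hv
      have := i.isLt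
      have hi2 : (i:ℕ) = m + 2 := by omega
      rw [hi2] at hv
      rw [show m+2+1 = m+3 by omega, Nat.mod_self] at hv
      omega
  have htri : (myS m r).BlockTriangular id := by
    intro i j hij
    have hlt : (j:ℕ) < (i:ℕ) := hij
    simp only [myS, Matrix.of_apply]
    rw [if_neg (by simp only [Fin.ext_iff]; omega)]
    have h2 : (if j = i + 1 then (if 1 ≤ (i:ℕ) ∧ (i:ℕ) ≤ m+1 then -r else 0) else 0) = 0 := by
      by_cases hc : 1 ≤ (i:ℕ) ∧ (i:ℕ) ≤ m+1
      · rw [if_neg]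
        intro h
        have hv := congrArg Fin.val h
        rw [myFinAdd1 m i hc.2] at hv
        omega
      · simp [hc]
    rw [h2]; ring
  rw [Matrix.det_of_upperTriangular htri]
  apply Finset.prod_eq_one
  intro i _
  simp only [myS, Matrix.of_apply, if_pos rfl, if_neg (fun h => hne i h)]
  simp

lemma myLdet (m : ℕ) (r c x : ℚ) (W : ℕ → ℚ) :
    (myL m r c x W).det = W 1 * (myV m r c W 1 * x^(m+1)) := by
  have htri : (myL m r c x W).BlockTriangular OrderDual.toDual := by
    intro i j hij
    have hlt : (i:ℕ) < (j:ℕ) := hij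
    simp only [myL, Matrix.of_apply]
    by_cases h1 : (i:ℕ) = 0
    · rw [if_pos h1, if_neg (by omega)]
    · rw [if_neg h1, if_neg (by omega), if_neg (by omega),
        if_neg (fun h => absurd (congrArg Fin.val h) (by omega))]
  rw [Matrix.det_of_lowerTriangular _ htri, Fin.prod_univ_succ, Fin.prod_univ_succ]
  have e0 : myL m r c x W 0 0 = W 1 := by
    simp only [myL, Matrix.of_apply]
    norm_num
  have e1 : myL m r c x W (Fin.succ 0) (Fin.succ 0) = myV m r c W 1 := by
    have hv : ((Fin.succ (0 : Fin (m+2)) : Fin (m+3)) : ℕ) = 1 := rfl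
    simp only [myL, Matrix.of_apply, hv]
    norm_num
  have e2 : ∀ i : Fin (m+1), myL m r c x W (Fin.succ (Fin.succ i)) (Fin.succ (Fin.succ i)) = x := by
    intro i
    have hv : ((Fin.succ (Fin.succ i) : Fin (m+3)) : ℕ) = (i:ℕ) + 2 := rfl
    simp only [myL, Matrix.of_apply, hv]
    rw [if_neg (by omega), if_neg (by omega), if_neg (by omega)]
    simp
  rw [e0, e1]
  congr 1
  congr 1
  rw [Finset.prod_congr rfl (fun i _ => e2 i), Finset.prod_const, Finset.card_univ,
    Fintype.card_fin]
lemma myKey (m : ℕ) (p q : ℚ) (W : ℕ → ℚ)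
    (hrec : ∀ k, W (k + 2) = p * W (k + 1) + q * W k)
    (hb : W 1 ≠ 0) (hx : W 1 - W (m+4) ≠ 0) :
    (Matrix.of fun i j : Fin (m+3) => W (((j - i : Fin (m+3))).val + 1)) * myG m (W 2 / W 1) p q
      = myS m (q * (W (m+3) - W 0) / (W 1 - W (m+4)))
          * myL m (q * (W (m+3) - W 0) / (W 1 - W (m+4))) (W 2 / W 1) (W 1 - W (m+4)) W := by
  set c := W 2 / W 1 with hc
  set x := W 1 - W (m+4) with hxdef
  set r := q * (W (m+3) - W 0) / x with hr
  have hrx : r * x = q * (W (m+3) - W 0) := div_mul_cancel₀ _ hx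
  have hcB : c * W 1 = W 2 := div_mul_cancel₀ _ hb
  have hR : ∀ s t u : ℕ, t + 1 = s → u + 2 = s → W s - p * W t - q * W u = 0 := by
    intro s t u h1 h2
    obtain rfl : s = u + 2 := h2.symm
    obtain rfl : t = u + 1 := by omega
    linear_combination hrec u
  set M : Matrix (Fin (m+3)) (Fin (m+3)) ℚ :=
    Matrix.of fun i j : Fin (m+3) => W (((j - i : Fin (m+3))).val + 1) with hMdef
  have hMle : ∀ i' j' : Fin (m+3), (i':ℕ) ≤ (j':ℕ) → M i' j' = W ((j':ℕ) - (i':ℕ) + 1) := by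
    intro i' j' h
    show W _ = _
    rw [myFinSub, if_pos h]
  have hMgt : ∀ i' j' : Fin (m+3), (j':ℕ) < (i':ℕ) → M i' j' = W (m+3 + (j':ℕ) - (i':ℕ) + 1) := by
    intro i' j' h
    show W _ = _
    rw [myFinSub, if_neg (by omega)]
  have hu : ∀ k : ℕ, k ≤ m+1 → myU m r W k = W (m+4-k) + r * myU m r W (k+1) := by
    intro k hk
    simpa only [myU] using myPeel m r (fun t => W (m+4-t)) k (by omega)
  have hv : ∀ k : ℕ, k ≤ m+1 →
      myV m r c W k = ((if k = 1 then W 1 else W (m+5-k)) - c * W (m+4-k)) + r * myV m r c W (k+1) := by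
    intro k hk
    simpa only [myV] using
      myPeel m r (fun t => (if t = 1 then W 1 else W (m+5-t)) - c * W (m+4-t)) k (by omega)
  have hulast : myU m r W (m+2) = W 2 := by
    simp only [myU, Finset.Icc_self, Finset.sum_singleton, Nat.sub_self, pow_zero, one_mul]
    congr 1
    omega
  have hvlast : myV m r c W (m+2) = W 3 - c * W 2 := by
    simp only [myV, Finset.Icc_self, Finset.sum_singleton, Nat.sub_self, pow_zero, one_mul]
    rw [if_neg (by omega), show m+5-(m+2) = 3 by omega, show m+4-(m+2) = 2 by omega]
  ext i j
  rw [myMulG, myMulS]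
  have hiv := i.isLt
  have hjv := j.isLt
  by_cases hj0 : (j:ℕ) = 0
  · -- column 0
    rw [if_neg (by omega), if_neg (by omega), if_neg (by omega)]
    simp only [zero_mul, add_zero]
    by_cases hi0 : (i:ℕ) = 0
    · rw [if_neg (by omega), zero_mul, add_zero, hMle i j (by omega)]
      show _ = if (i:ℕ) = 0 then (if (j:ℕ) = 0 then W 1 else 0) else _
      rw [if_pos hi0, if_pos hj0]
      congr 1
      omega
    · by_cases him : (i:ℕ) ≤ m+1
      · rw [if_pos ⟨by omega, him⟩, hMgt i j (by omega)]
        have hadd : ((i + 1 : Fin (m+3)) : ℕ) = (i:ℕ) + 1 := myFinAdd1 m i him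
        show _ = (if (i:ℕ) = 0 then _ else if (j:ℕ) = 0 then myU m r W (i:ℕ) else _)
              + (-r) * (if ((i+1:Fin (m+3)):ℕ) = 0 then _ else if (j:ℕ) = 0 then myU m r W ((i+1:Fin (m+3)):ℕ) else _)
        rw [if_neg hi0, if_pos hj0, hadd, if_neg (by omega), if_pos hj0,
          hu (i:ℕ) him, show m+3+(j:ℕ)-(i:ℕ)+1 = m+4-(i:ℕ) by omega]
        ring
      · have hie : (i:ℕ) = m+2 := by omega
        rw [if_neg (by omega), zero_mul, add_zero, hMgt i j (by omega)]
        show _ = if (i:ℕ) = 0 then _ else if (j:ℕ) = 0 then myU m r W (i:ℕ) else _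
        rw [if_neg hi0, if_pos hj0, hie, hulast]
        congr 1
        omega
  · -- columns ≥ 1
    have h00 : ((0 : Fin (m+3)) : ℕ) = 0 := rfl
    simp only [myL, Matrix.of_apply]
    by_cases hj1 : (j:ℕ) = 1
    · -- column 1
      have cj2 : ¬(2 ≤ (j:ℕ)) := by omega
      by_cases hi0 : (i:ℕ) = 0
      · have cmid : ¬(1 ≤ (i:ℕ) ∧ (i:ℕ) ≤ m+1) := by omega
        simp only [if_pos hj1, if_neg cj2, if_pos hi0, if_neg hj0, if_neg cmid,
          zero_mul, add_zero]
        rw [hMle i j (by omega), hMle i 0 (by omega), h00,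
          show (j:ℕ) - (i:ℕ) + 1 = 2 from by omega,
          show 0 - (i:ℕ) + 1 = 1 from by omega]
        linear_combination -hcB
      · by_cases him : (i:ℕ) ≤ m+1
        · have hadd : ((i + 1 : Fin (m+3)) : ℕ) = (i:ℕ) + 1 := myFinAdd1 m i him
          have cmid : (1 ≤ (i:ℕ) ∧ (i:ℕ) ≤ m+1) := ⟨by omega, him⟩
          have ci10 : ¬(((i + 1 : Fin (m+3)) : ℕ) = 0) := by rw [hadd]; omega
          simp only [if_pos hj1, if_neg cj2, if_neg hi0, if_neg hj0, if_pos cmid,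
            if_neg ci10, zero_mul, add_zero]
          rw [hadd, hv (i:ℕ) him]
          by_cases hi1 : (i:ℕ) = 1
          · rw [hMle i j (by omega), hMgt i 0 (by omega), h00, if_pos hi1,
              show (j:ℕ) - (i:ℕ) + 1 = 1 from by omega,
              show m+3+0-(i:ℕ)+1 = m+3 from by omega,
              show m+4-(i:ℕ) = m+3 from by omega]
            ring
          · rw [hMgt i j (by omega), hMgt i 0 (by omega), h00, if_neg hi1,
              show m+3+(j:ℕ)-(i:ℕ)+1 = m+5-(i:ℕ) from by omega,
              show m+3+0-(i:ℕ)+1 = m+4-(i:ℕ) from by omega]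
            ring
        · have hie : (i:ℕ) = m+2 := by omega
          have cmid : ¬(1 ≤ (i:ℕ) ∧ (i:ℕ) ≤ m+1) := by omega
          simp only [if_pos hj1, if_neg cj2, if_neg hi0, if_neg hj0, if_neg cmid,
            zero_mul, add_zero]
          rw [hMgt i j (by omega), hMgt i 0 (by omega), h00, hie, hvlast,
            show m+3+(j:ℕ)-(m+2)+1 = 3 from by omega,
            show m+3+0-(m+2)+1 = 2 from by omega]
          ring
    · -- columns ≥ 2
      have hj2 : 2 ≤ (j:ℕ) := by omega
      have hj1v : ((j - 1 : Fin (m+3)) : ℕ) = (j:ℕ) - 1 := myFinSub1 m j (by omega)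
      have hj2v : ((j - 2 : Fin (m+3)) : ℕ) = (j:ℕ) - 2 := myFinSub2 m j hj2
      by_cases hi0 : (i:ℕ) = 0
      · have cmid : ¬(1 ≤ (i:ℕ) ∧ (i:ℕ) ≤ m+1) := by omega
        simp only [if_neg hj1, if_pos hj2, if_pos hi0, if_neg hj0, if_neg cmid,
          zero_mul, add_zero]
        rw [hMle i j (by omega), hMle i (j-1) (by rw [hj1v]; omega),
          hMle i (j-2) (by rw [hj2v]; omega), hj1v, hj2v]
        linear_combination hR ((j:ℕ)-(i:ℕ)+1) ((j:ℕ)-1-(i:ℕ)+1) ((j:ℕ)-2-(i:ℕ)+1)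
          (by omega) (by omega)
      · by_cases him : (i:ℕ) ≤ m+1
        · have hadd : ((i + 1 : Fin (m+3)) : ℕ) = (i:ℕ) + 1 := myFinAdd1 m i him
          have cmid : (1 ≤ (i:ℕ) ∧ (i:ℕ) ≤ m+1) := ⟨by omega, him⟩
          have ci10 : ¬(((i + 1 : Fin (m+3)) : ℕ) = 0) := by rw [hadd]; omega
          simp only [if_neg hj1, if_pos hj2, if_neg hi0, if_neg hj0, if_pos cmid,
            if_neg ci10, zero_mul, add_zero]
          by_cases hij : (i:ℕ) = (j:ℕ)
          · have cij1 : ¬(i + 1 = j) := by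
              intro h; have := congrArg Fin.val h; rw [hadd] at this; omega
            rw [if_pos (Fin.ext hij), if_neg cij1,
              hMle i j (by omega), hMgt i (j-1) (by rw [hj1v]; omega),
              hMgt i (j-2) (by rw [hj2v]; omega), hj1v, hj2v,
              show (j:ℕ)-(i:ℕ)+1 = 1 from by omega,
              show m+3+((j:ℕ)-1)-(i:ℕ)+1 = m+3 from by omega,
              show m+3+((j:ℕ)-2)-(i:ℕ)+1 = m+2 from by omega, hxdef]
            linear_combination hR (m+4) (m+3) (m+2) (by omega) (by omega)
          · by_cases hij1 : (i:ℕ) + 1 = (j:ℕ)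
            · rw [if_neg (fun h => hij (congrArg Fin.val h)),
                if_pos (Fin.ext (by rw [hadd]; omega)),
                hMle i j (by omega), hMle i (j-1) (by rw [hj1v]; omega),
                hMgt i (j-2) (by rw [hj2v]; omega), hj1v, hj2v,
                show (j:ℕ)-(i:ℕ)+1 = 2 from by omega,
                show (j:ℕ)-1-(i:ℕ)+1 = 1 from by omega,
                show m+3+((j:ℕ)-2)-(i:ℕ)+1 = m+3 from by omega]
              linear_combination hR 2 1 0 (by omega) (by omega) + hrx
            · have cij1 : ¬(i + 1 = j) := by
                intro h; have := congrArg Fin.val h; rw [hadd] at this; omega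
              rw [if_neg (fun h => hij (congrArg Fin.val h)), if_neg cij1]
              by_cases hlt : (i:ℕ) < (j:ℕ)
              · rw [hMle i j (by omega), hMle i (j-1) (by rw [hj1v]; omega),
                  hMle i (j-2) (by rw [hj2v]; omega), hj1v, hj2v]
                linear_combination hR ((j:ℕ)-(i:ℕ)+1) ((j:ℕ)-1-(i:ℕ)+1) ((j:ℕ)-2-(i:ℕ)+1)
                  (by omega) (by omega)
              · rw [hMgt i j (by omega), hMgt i (j-1) (by rw [hj1v]; omega),
                  hMgt i (j-2) (by rw [hj2v]; omega), hj1v, hj2v]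
                linear_combination hR (m+3+(j:ℕ)-(i:ℕ)+1) (m+3+((j:ℕ)-1)-(i:ℕ)+1)
                  (m+3+((j:ℕ)-2)-(i:ℕ)+1) (by omega) (by omega)
        · have hie : (i:ℕ) = m+2 := by omega
          have cmid : ¬(1 ≤ (i:ℕ) ∧ (i:ℕ) ≤ m+1) := by omega
          simp only [if_neg hj1, if_pos hj2, if_neg hi0, if_neg hj0, if_neg cmid,
            zero_mul, add_zero]
          by_cases hij : (i:ℕ) = (j:ℕ)
          · rw [if_pos (Fin.ext hij), hMle i j (by omega),
              hMgt i (j-1) (by rw [hj1v]; omega), hMgt i (j-2) (by rw [hj2v]; omega),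
              hj1v, hj2v,
              show (j:ℕ)-(i:ℕ)+1 = 1 from by omega,
              show m+3+((j:ℕ)-1)-(i:ℕ)+1 = m+3 from by omega,
              show m+3+((j:ℕ)-2)-(i:ℕ)+1 = m+2 from by omega, hxdef]
            linear_combination hR (m+4) (m+3) (m+2) (by omega) (by omega)
          · rw [if_neg (fun h => hij (congrArg Fin.val h)),
              hMgt i j (by omega), hMgt i (j-1) (by rw [hj1v]; omega),
              hMgt i (j-2) (by rw [hj2v]; omega), hj1v, hj2v]
            linear_combination hR (m+3+(j:ℕ)-(i:ℕ)+1) (m+3+((j:ℕ)-1)-(i:ℕ)+1)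
              (m+3+((j:ℕ)-2)-(i:ℕ)+1) (by omega) (by omega)

theorem stmt16 (n : ℕ) (hn : 3 ≤ n) (a b p q : ℚ) (W : ℕ → ℚ)
    (hW0 : W 0 = a) (hW1 : W 1 = b)
    (hrec : ∀ k, W (k + 2) = p * W (k + 1) + q * W k)
    (hb : b ≠ 0) (hne : W 1 ≠ W (n + 1)) :
    IsUnit (Matrix.of fun i j : Fin n => W ((j - i : Fin n).val + 1)) ↔
      (W 1 - W 2 * W n / W 1 +
        ∑ k ∈ Finset.Icc 2 (n - 1),
          (W (k + 1) - W 2 * W k / W 1) *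
            (q * (W n - W 0) / (W 1 - W (n + 1))) ^ (n - k)) ≠ 0 := by
  obtain ⟨m, rfl⟩ : ∃ m, n = m + 3 := ⟨n - 3, by omega⟩
  subst hW0 hW1
  simp only [show m+3+1 = m+4 from by omega, show m+3-1 = m+2 from by omega] at *
  have hx : W 1 - W (m+4) ≠ 0 := sub_ne_zero.mpr hne
  set c := W 2 / W 1 with hc
  set x := W 1 - W (m+4) with hxdef
  set r := q * (W (m+3) - W 0) / x with hr
  have hdet : (Matrix.of fun i j : Fin (m+3) => W (((j - i : Fin (m+3))).val + 1)).det
      = W 1 * (myV m r c W 1 * x^(m+1)) := by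
    have h1 := congrArg Matrix.det (myKey m p q W hrec hb hx)
    rw [Matrix.det_mul, Matrix.det_mul, myGdet, mySdet, mul_one, one_mul, myLdet] at h1
    exact h1
  have hveq : myV m r c W 1
      = W 1 - W 2 * W (m+3) / W 1 +
        ∑ k ∈ Finset.Icc 2 (m+2),
          (W (k + 1) - W 2 * W k / W 1) * r ^ (m+3-k) := by
    rw [myV, myPeel m r _ 1 (by omega)]
    rw [if_pos rfl, show m+4-1 = m+3 from by omega, Finset.mul_sum]
    have hsum : ∑ k ∈ Finset.Icc (1+1) (m+2),
          r * (r ^ (k - (1+1)) * ((if k = 1 then W 1 else W (m+5-k)) - c * W (m+4-k)))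
        = ∑ k ∈ Finset.Icc 2 (m+2), (W (k + 1) - W 2 * W k / W 1) * r ^ (m+3-k) := by
      refine Finset.sum_nbij' (fun k => m+4-k) (fun k => m+4-k) ?_ ?_ ?_ ?_ ?_
      · intro k hk
        simp only [Finset.mem_Icc] at *
        omega
      · intro k hk
        simp only [Finset.mem_Icc] at *
        omega
      · intro k hk
        simp only [Finset.mem_Icc] at hk
        show m + 4 - (m + 4 - k) = k
        omega
      · intro k hk
        simp only [Finset.mem_Icc] at hk
        show m + 4 - (m + 4 - k) = k
        omega
      · intro k hk
        simp only [Finset.mem_Icc] at hk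
        show _ = (W ((m+4-k) + 1) - W 2 * W (m+4-k) / W 1) * r ^ (m+3-(m+4-k))
        rw [if_neg (show ¬(k = 1) from by omega),
          show m+4-k+1 = m+5-k from by omega,
          show m+3-(m+4-k) = (k-(1+1))+1 from by omega, pow_succ, hc]
        ring
    rw [hsum, hc]
    ring
  rw [Matrix.isUnit_iff_isUnit_det, isUnit_iff_ne_zero, hdet, hveq]
  constructor
  · intro h hg
    exact h (by rw [hg, zero_mul, mul_zero])
  · intro hg
    exact mul_ne_zero hb (mul_ne_zero hg (pow_ne_zero _ hx))
end

section
/- Let n ≥ 3 and let W satisfy W_0 = a, W_1 = b ≠ 0, W_k = p*W_{k-1} + q*W_{k-2}, with W_1 ≠ W_{n+1} over ℚ. Then det(circ(W_1,...,W_n)) = b*(b - W_{n+1})^{n-2}*g_n, where g_n = W_1 - W_2*W_n/W_1 + Σ_{k=2}^{n-1}(W_{k+1} - W_2*W_k/W_1)*(q*(W_n - W_0)/(W_1 - W_{n+1}))^{n-k}. -/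
namespace Stmt17Aux

open Matrix Finset

variable {N : ℕ}

def Am (N : ℕ) (W : ℕ → ℚ) : Matrix (Fin (N+3)) (Fin (N+3)) ℚ :=
  Matrix.of fun i j => W ((j - i).val + 1)

def Lm (N : ℕ) (p q c : ℚ) : Matrix (Fin (N+3)) (Fin (N+3)) ℚ := fun i k =>
  (if k = i then (1:ℚ) else 0)
  + (if i.val ≤ N then (-p) * (if k = i + 1 then 1 else 0) + (-q) * (if k = i + 2 then 1 else 0) else 0)
  + (if i.val = N + 1 then (-c) * (if k = i + 1 then 1 else 0) else 0)

def Um (N : ℕ) (r : ℚ) : Matrix (Fin (N+3)) (Fin (N+3)) ℚ := fun l j =>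
  if j.val ≤ N + 1 then (if l.val ≤ j.val then r ^ (j.val - l.val) else 0)
  else (if l = j then 1 else 0)

lemma val_sub (u v : Fin (N+3)) : (u - v).val = (u.val + ((N+3) - v.val)) % (N+3) := by
  rw [Fin.sub_def]; ring_nf

lemma val_add_one {i : Fin (N+3)} (h : i.val + 1 < N + 3) : (i + (1:Fin (N+3))).val = i.val + 1 := by
  rw [Fin.add_def]
  simp [Nat.mod_eq_of_lt h]

lemma val_add_two {i : Fin (N+3)} (h : i.val + 2 < N + 3) : (i + (2:Fin (N+3))).val = i.val + 2 := by
  rw [Fin.add_def]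
  simp [Fin.val_two, Nat.mod_eq_of_lt h]

lemma det_Lm (p q c : ℚ) : (Lm N p q c).det = 1 := by
  have h : (Lm N p q c).BlockTriangular id := by
    intro i k hk
    simp only [id_eq] at hk
    have hk' : k.val < i.val := hk
    unfold Lm
    have h1 : i.val ≤ N + 1 → k ≠ i + 1 := by
      intro hi he
      have := val_add_one (i := i) (by omega)
      rw [he, this] at hk'
      omega
    have h2 : i.val ≤ N → k ≠ i + 2 := by
      intro hi he
      have := val_add_two (i := i) (by omega)
      rw [he, this] at hk'
      omega
    have h0 : k ≠ i := by intro he; rw [he] at hk'; omega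
    by_cases hiN : i.val ≤ N
    · simp [h0, h1 (by omega), h2 hiN, hiN, show i.val ≠ N + 1 by omega]
    · by_cases hiN1 : i.val = N + 1
      · simp [h0, h1 (by omega), hiN, hiN1]
      · simp [h0, hiN, hiN1]
  rw [Matrix.det_of_upperTriangular h]
  apply Finset.prod_eq_one
  intro i _
  unfold Lm
  have h1 : i.val ≤ N + 1 → i ≠ i + 1 := by
    intro hi he
    have := val_add_one (i := i) (by omega)
    rw [← he] at this
    omega
  have h2 : i.val ≤ N → i ≠ i + 2 := by
    intro hi he
    have := val_add_two (i := i) (by omega)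
    rw [← he] at this
    omega
  by_cases hiN : i.val ≤ N
  · simp [h1 (by omega), h2 hiN, hiN, show i.val ≠ N + 1 by omega]
  · by_cases hiN1 : i.val = N + 1
    · simp [h1 (by omega), hiN, hiN1]
    · simp [hiN, hiN1]

lemma det_Um (r : ℚ) : (Um N r).det = 1 := by
  have h : (Um N r).BlockTriangular id := by
    intro l j hj
    have hj' : j.val < l.val := hj
    unfold Um
    by_cases hcase : j.val ≤ N + 1
    · simp [hcase, show ¬ (l.val ≤ j.val) by omega]
    · simp [hcase, show l ≠ j from fun he => by rw [he] at hj'; omega]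
  rw [Matrix.det_of_upperTriangular h]
  apply Finset.prod_eq_one
  intro j _
  unfold Um
  by_cases hcase : j.val ≤ N + 1 <;> simp [hcase]

lemma LA_apply (p q c : ℚ) (W : ℕ → ℚ) (i j : Fin (N+3)) :
    (Lm N p q c * Am N W) i j = Am N W i j
      + (if i.val ≤ N then -p * Am N W (i+1) j + -q * Am N W (i+2) j else 0)
      + (if i.val = N+1 then -c * Am N W (i+1) j else 0) := by
  simp only [Matrix.mul_apply, Lm, add_mul, ite_mul, one_mul, zero_mul, mul_ite, mul_zero,
    Finset.sum_add_distrib, Finset.sum_ite_eq' Finset.univ, Finset.mem_univ, if_true,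
    Finset.sum_ite_irrel, Finset.sum_const_zero, mul_one]

lemma key (W : ℕ → ℚ) (p q : ℚ)
    (hrec : ∀ k, W (k + 2) = p * W (k + 1) + q * W k) (u : Fin (N+3)) :
    W (u.val + 1) - p * W ((u - 1).val + 1) - q * W ((u - 1 - 1).val + 1)
      = if u.val = 0 then W 1 - W (N+4) else if u.val = 1 then q * (W 0 - W (N+3)) else 0 := by
  have h1 : (u - 1).val = (u.val + (N+2)) % (N+3) := by
    rw [val_sub]; simp
  have h2 : (u - 1 - 1).val = ((u - 1).val + (N+2)) % (N+3) := by
    rw [val_sub]; simp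
  rcases Nat.lt_or_ge u.val 2 with hu | hu
  · interval_cases h : u.val
    · have hv1 : (u - 1).val = N+2 := by
        rw [h1, Nat.zero_add, Nat.mod_eq_of_lt (by omega)]
      have hv2 : (u - 1 - 1).val = N+1 := by
        rw [h2, hv1, show N+2 + (N+2) = (N+1) + (N+3) by omega, Nat.add_mod_right,
          Nat.mod_eq_of_lt (by omega)]
      rw [hv1, hv2]
      simp only [if_pos rfl]
      have := hrec (N+2)
      rw [show N+2+2 = N+4 by omega, show N+2+1 = N+3 by omega] at this
      rw [show N+1+1 = N+2 by omega, show N+2+1 = N+3 by omega, this, Nat.zero_add]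
      norm_num; ring
    · have hv1 : (u - 1).val = 0 := by
        rw [h1, show 1 + (N+2) = 0 + (N+3) by omega, Nat.add_mod_right]; rfl
      have hv2 : (u - 1 - 1).val = N+2 := by
        rw [h2, hv1, Nat.zero_add, Nat.mod_eq_of_lt (by omega)]
      rw [hv1, hv2]
      simp only [show ¬((1:ℕ) = 0) by omega, if_false, if_pos rfl]
      have := hrec 0
      rw [show (0:ℕ)+2 = 2 by rfl, show (0:ℕ)+1 = 1 by rfl] at this
      rw [show (1:ℕ)+1 = 2 by rfl, show N+2+1 = N+3 by omega, Nat.zero_add, this]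
      norm_num; ring
  · obtain ⟨m, hm⟩ : ∃ m, u.val = m + 2 := ⟨u.val - 2, by omega⟩
    have hult := u.isLt
    have hv1 : (u - 1).val = m+1 := by
      rw [h1, hm, show m+2 + (N+2) = (m+1) + (N+3) by omega, Nat.add_mod_right,
        Nat.mod_eq_of_lt (by omega)]
    have hv2 : (u - 1 - 1).val = m := by
      rw [h2, hv1, show m+1 + (N+2) = m + (N+3) by omega, Nat.add_mod_right,
        Nat.mod_eq_of_lt (by omega)]
    rw [hv1, hv2, hm]
    simp only [show m+2 ≠ 0 by omega, show m+2 ≠ 1 by omega, if_false]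
    have := hrec (m+1)
    rw [show m+1+2 = m+2+1 by omega, show m+1+1 = m+2 by omega] at this
    rw [this]; ring

lemma M_row_low (p q c : ℚ) (W : ℕ → ℚ)
    (hrec : ∀ k, W (k + 2) = p * W (k + 1) + q * W k)
    (i j : Fin (N+3)) (hi : i.val ≤ N) :
    (Lm N p q c * Am N W) i j =
      (W 1 - W (N+4)) * (if j = i then 1 else 0)
        + (q * (W 0 - W (N+3))) * (if j = i + 1 then 1 else 0) := by
  rw [LA_apply, if_pos hi, if_neg (by omega), add_zero]
  unfold Am
  simp only [Matrix.of_apply]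
  have e1 : j - (i + 1) = j - i - 1 := sub_add_eq_sub_sub j i 1
  have e2 : j - (i + 2) = j - i - 1 - 1 := by
    rw [show (2:Fin (N+3)) = 1 + 1 from by rfl, ← add_assoc,
      sub_add_eq_sub_sub, sub_add_eq_sub_sub]
  rw [e1, e2]
  have hk := key W p q hrec (j - i)
  have h0 : ((j - i).val = 0) ↔ (j = i) := by
    constructor
    · intro h
      exact sub_eq_zero.mp (Fin.ext (by rw [h]; rfl))
    · intro h
      rw [h, sub_self]
      rfl
  have h1iff : ((j - i).val = 1) ↔ (j = i + 1) := by
    constructor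
    · intro h
      have : j - i = 1 := Fin.ext (by rw [h, Fin.val_one])
      rw [sub_eq_iff_eq_add] at this
      exact this.trans (add_comm 1 i)
    · intro h
      have : j - i = 1 := by rw [h, add_sub_cancel_left]
      rw [this, Fin.val_one]
  calc W ((j-i).val + 1) + (-p * W ((j - i - 1).val + 1) + -q * W ((j - i - 1 - 1).val + 1))
      = W ((j-i).val + 1) - p * W ((j - i - 1).val + 1) - q * W ((j - i - 1 - 1).val + 1) := by ring
    _ = if (j-i).val = 0 then W 1 - W (N+4) else if (j-i).val = 1 then q * (W 0 - W (N+3)) else 0 := hk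
    _ = (W 1 - W (N+4)) * (if j = i then 1 else 0)
        + (q * (W 0 - W (N+3))) * (if j = i + 1 then 1 else 0) := by
      by_cases hc0 : (j - i).val = 0 <;> by_cases hc1 : (j - i).val = 1
      · omega
      · simp [hc0, hc1, h0.mp hc0, (h1iff.not.mp hc1)]
      · simp [hc0, hc1, h1iff.mp hc1, (h0.not.mp hc0)]
      · simp [hc0, hc1, (h0.not.mp hc0), (h1iff.not.mp hc1)]

-- continuation lemmas (tested with context of full.lean)
lemma B_apply_low (p q c r : ℚ) (W : ℕ → ℚ)
    (hrec : ∀ k, W (k + 2) = p * W (k + 1) + q * W k)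
    (i j : Fin (N+3)) (hi : i.val ≤ N) :
    ((Lm N p q c * Am N W) * Um N r) i j =
      (W 1 - W (N+4)) * Um N r i j + (q * (W 0 - W (N+3))) * Um N r (i+1) j := by
  rw [Matrix.mul_apply]
  rw [Finset.sum_congr rfl (fun l _ => by rw [M_row_low p q c W hrec i l hi])]
  simp only [add_mul, ite_mul, one_mul, zero_mul, mul_ite, mul_zero, mul_one,
    Finset.sum_add_distrib, Finset.sum_ite_eq' Finset.univ, Finset.mem_univ, if_true]

lemma mul_U_last (r : ℚ) (Mx : Matrix (Fin (N+3)) (Fin (N+3)) ℚ) (i j : Fin (N+3))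
    (hj : j.val = N+2) : (Mx * Um N r) i j = Mx i j := by
  simp only [Matrix.mul_apply, Um, hj, show ¬(N+2 ≤ N+1) by omega, if_false,
    mul_ite, mul_one, mul_zero]
  rw [Finset.sum_ite_eq' Finset.univ j (fun l => Mx i l)]
  simp

lemma M_row_mid (p q c : ℚ) (W : ℕ → ℚ) (i j : Fin (N+3)) (hi : i.val = N+1) :
    (Lm N p q c * Am N W) i j = Am N W i j - c * Am N W (i+1) j := by
  rw [LA_apply, if_neg (by omega), if_pos hi]
  ring

lemma M_row_last (p q c : ℚ) (W : ℕ → ℚ) (i j : Fin (N+3)) (hi : i.val = N+2) :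
    (Lm N p q c * Am N W) i j = Am N W i j := by
  rw [LA_apply, if_neg (by omega), if_neg (by omega)]
  ring

lemma B_diag_mid (p q c r : ℚ) (W : ℕ → ℚ) (i : Fin (N+3)) (hi : i.val = N+1) :
    ((Lm N p q c * Am N W) * Um N r) i i
      = ∑ m ∈ Finset.range (N+2),
          (W ((m+2) % (N+3) + 1) - c * W ((m+1) % (N+3) + 1)) * r^(N+1-m) := by
  have hi1 : (i + 1).val = N + 2 := by
    rw [val_add_one (by omega), hi]
  have step : ∀ l : Fin (N+3), (Lm N p q c * Am N W) i l * Um N r l i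
      = (W ((l.val+2) % (N+3) + 1) - c * W ((l.val+1) % (N+3) + 1))
        * (if l.val ≤ N+1 then r^(N+1-l.val) else 0) := by
    intro l
    rw [M_row_mid p q c W i l hi]
    have e1 : (l - i).val = (l.val + 2) % (N+3) := by
      rw [val_sub, hi, show N+3-(N+1) = 2 by omega]
    have e2 : (l - (i+1)).val = (l.val + 1) % (N+3) := by
      rw [val_sub, hi1, show N+3-(N+2) = 1 by omega]
    have eU : Um N r l i = (if l.val ≤ N+1 then r^(N+1-l.val) else 0) := by
      unfold Um
      rw [if_pos (by omega), hi]
    rw [eU]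
    unfold Am
    simp only [Matrix.of_apply]
    rw [e1, e2]
  rw [Matrix.mul_apply]
  rw [Finset.sum_congr rfl (fun l _ => step l)]
  rw [Fin.sum_univ_eq_sum_range
    (fun m => (W ((m+2) % (N+3) + 1) - c * W ((m+1) % (N+3) + 1))
        * (if m ≤ N+1 then r^(N+1-m) else 0)) (N+3)]
  rw [Finset.sum_range_succ, if_neg (by omega), mul_zero, add_zero]
  exact Finset.sum_congr rfl (fun m hm => by
    rw [if_pos (by simp at hm; omega)])
end Stmt17Aux

theorem stmt17 (n : ℕ) (hn : 3 ≤ n) (a b p q : ℚ) (W : ℕ → ℚ)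
    (hW0 : W 0 = a) (hW1 : W 1 = b)
    (hrec : ∀ k, W (k + 2) = p * W (k + 1) + q * W k)
    (hb : b ≠ 0) (hne : W 1 ≠ W (n + 1)) :
    (Matrix.of fun i j : Fin n => W ((j - i : Fin n).val + 1)).det =
      b * (b - W (n + 1)) ^ (n - 2) *
        (W 1 - W 2 * W n / W 1 +
          ∑ k ∈ Finset.Icc 2 (n - 1),
            (W (k + 1) - W 2 * W k / W 1) *
              (q * (W n - W 0) / (W 1 - W (n + 1))) ^ (n - k)) := by
  obtain ⟨N, rfl⟩ : ∃ N, n = N + 3 := ⟨n - 3, by omega⟩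
  rw [show N + 3 + 1 = N + 4 by omega, show N + 3 - 2 = N + 1 by omega,
    show N + 3 - 1 = N + 2 by omega, ← hW1]
  rw [show N + 3 + 1 = N + 4 by omega] at hne
  have hW1ne : W 1 ≠ 0 := by rw [hW1]; exact hb
  have hxne : W 1 - W (N+4) ≠ 0 := sub_ne_zero.mpr hne
  set c : ℚ := W 2 / W 1 with hc
  set r : ℚ := q * (W (N+3) - W 0) / (W 1 - W (N+4)) with hr
  have hxr : (W 1 - W (N+4)) * r = q * (W (N+3) - W 0) := by
    rw [hr, mul_comm, div_mul_cancel₀ _ hxne]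
  -- determinant via triangular factorization
  have hdetB : (Stmt17Aux.Am N W).det = ((Stmt17Aux.Lm N p q c * Stmt17Aux.Am N W) * Stmt17Aux.Um N r).det := by
    rw [Matrix.det_mul, Matrix.det_mul, Stmt17Aux.det_Lm, Stmt17Aux.det_Um, one_mul, mul_one]
  have htri : ((Stmt17Aux.Lm N p q c * Stmt17Aux.Am N W) * Stmt17Aux.Um N r).BlockTriangular OrderDual.toDual := by
    intro i j hij
    have hij' : i.val < j.val := hij
    have hjlt := j.isLt
    by_cases hi : i.val ≤ N
    · rw [Stmt17Aux.B_apply_low p q c r W hrec i j hi]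
      have hi1 : (i + 1).val = i.val + 1 := Stmt17Aux.val_add_one (by omega)
      by_cases hj : j.val ≤ N + 1
      · unfold Stmt17Aux.Um
        rw [if_pos hj, if_pos hj, if_pos (by omega), hi1, if_pos (by omega)]
        have hd : j.val - i.val = (j.val - (i.val + 1)) + 1 := by omega
        rw [hd, pow_succ]
        calc (W 1 - W (N+4)) * (r ^ (j.val - (i.val+1)) * r)
              + q * (W 0 - W (N+3)) * r ^ (j.val - (i.val+1))
            = ((W 1 - W (N+4)) * r + q * (W 0 - W (N+3))) * r ^ (j.val - (i.val+1)) := by ring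
          _ = 0 := by rw [hxr]; ring
      · have hj2 : j.val = N + 2 := by omega
        unfold Stmt17Aux.Um
        simp only [hj2, show ¬(N+2 ≤ N+1) by omega, if_false]
        rw [if_neg (fun he : i = j => by rw [he] at hij'; omega),
          if_neg (fun he : i + 1 = j => by rw [← he, hi1] at hj2; omega)]
        ring
    · by_cases hi1 : i.val = N + 1
      · have hj2 : j.val = N + 2 := by omega
        rw [Stmt17Aux.mul_U_last r _ i j hj2, Stmt17Aux.M_row_mid p q c W i j hi1]
        have hip : (i + 1).val = N + 2 := by rw [Stmt17Aux.val_add_one (by omega), hi1]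
        have hij1 : i + 1 = j := Fin.ext (by rw [hip, hj2])
        have hsub : (j - i).val = 1 := by
          rw [Stmt17Aux.val_sub, hi1, hj2, show N+3-(N+1) = 2 by omega,
            show N+2+2 = 1 + (N+3) by omega, Nat.add_mod_right, Nat.mod_eq_of_lt (by omega)]
        have hAjj : Stmt17Aux.Am N W (i+1) j = W 1 := by
          rw [hij1]
          unfold Stmt17Aux.Am
          simp only [Matrix.of_apply, sub_self]
          rfl
        have hAij : Stmt17Aux.Am N W i j = W 2 := by
          unfold Stmt17Aux.Am
          simp only [Matrix.of_apply]
          rw [hsub]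
        rw [hAij, hAjj, hc, div_mul_cancel₀ _ hW1ne, sub_self]
      · omega
  rw [show (Matrix.of fun i j : Fin (N+3) => W ((j - i : Fin (N+3)).val + 1)) = Stmt17Aux.Am N W from rfl,
    hdetB, Matrix.det_of_lowerTriangular _ htri]
  -- diagonal entries
  set D : ℚ := ∑ m ∈ Finset.range (N+2),
      (W ((m+2) % (N+3) + 1) - c * W ((m+1) % (N+3) + 1)) * r^(N+1-m) with hD
  have hdiag : ∀ i : Fin (N+3),
      ((Stmt17Aux.Lm N p q c * Stmt17Aux.Am N W) * Stmt17Aux.Um N r) i i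
        = if i.val ≤ N then W 1 - W (N+4) else if i.val = N+1 then D else W 1 := by
    intro i
    by_cases hi : i.val ≤ N
    · rw [Stmt17Aux.B_apply_low p q c r W hrec i i hi, if_pos hi]
      have hi1 : (i + 1).val = i.val + 1 := Stmt17Aux.val_add_one (by omega)
      unfold Stmt17Aux.Um
      rw [if_pos (by omega), if_pos (le_refl _), Nat.sub_self, pow_zero, mul_one,
        if_pos (by omega), hi1, if_neg (by omega), mul_zero, add_zero]
    · by_cases hi1 : i.val = N + 1
      · rw [Stmt17Aux.B_diag_mid p q c r W i hi1, if_neg hi, if_pos hi1, hD]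
      · have hi2 : i.val = N + 2 := by have := i.isLt; omega
        rw [Stmt17Aux.mul_U_last r _ i i hi2, Stmt17Aux.M_row_last p q c W i i hi2,
          if_neg hi, if_neg hi1]
        unfold Stmt17Aux.Am
        simp only [Matrix.of_apply, sub_self]
        rfl
  rw [Finset.prod_congr rfl (fun i _ => hdiag i)]
  rw [Fin.prod_univ_eq_prod_range
    (fun m => if m ≤ N then W 1 - W (N+4) else if m = N+1 then D else W 1) (N+3)]
  rw [Finset.prod_range_succ, Finset.prod_range_succ]
  rw [show (if N+2 ≤ N then W 1 - W (N+4) else if N+2 = N+1 then D else W 1) = W 1 from by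
    rw [if_neg (by omega), if_neg (by omega)]]
  rw [show (if N+1 ≤ N then W 1 - W (N+4) else if N+1 = N+1 then D else W 1) = D from by
    rw [if_neg (by omega), if_pos rfl]]
  rw [Finset.prod_congr rfl (fun m hm => if_pos (by simp at hm; omega)),
    Finset.prod_const, Finset.card_range]
  -- now compute D
  have hDval : D = (W 1 - W 2 * W (N+3) / W 1)
      + ∑ m ∈ Finset.range (N+1), (W (m+3) - c * W (m+2)) * r^(N+1-m) := by
    rw [hD, Finset.sum_range_succ, Nat.mod_self, Nat.mod_eq_of_lt (by omega : N+2 < N+3),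
      Nat.sub_self, pow_zero, mul_one, show N+2+1 = N+3 by omega, Nat.zero_add]
    rw [Finset.sum_congr rfl (fun m hm => by
      have hm' : m < N + 1 := Finset.mem_range.mp hm
      rw [Nat.mod_eq_of_lt (by omega : m+2 < N+3), Nat.mod_eq_of_lt (by omega : m+1 < N+3),
        show m+2+1 = m+3 by omega, show m+1+1 = m+2 by omega])]
    rw [hc, div_mul_eq_mul_div]
    ring
  have hsum : ∑ k ∈ Finset.Icc 2 (N+2), (W (k + 1) - W 2 * W k / W 1) * r ^ (N+3-k)
      = ∑ m ∈ Finset.range (N+1), (W (m+3) - c * W (m+2)) * r^(N+1-m) := by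
    rw [← Finset.Ico_add_one_right_eq_Icc, Finset.sum_Ico_eq_sum_range,
      show N+2+1-2 = N+1 by omega]
    refine Finset.sum_congr rfl (fun m hm => ?_)
    have hm' : m < N + 1 := Finset.mem_range.mp hm
    rw [show 2+m+1 = m+3 by omega, show 2+m = m+2 by omega,
      show N+3-(m+2) = N+1-m by omega, hc, div_mul_eq_mul_div]
  rw [hsum, ← hDval]
  ring
end
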